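/- For every p with 2 < p ≤ ∞ there exists a constant C_p > 0 such that for all u ∈ H¹(ℝ), ‖u‖_{L^p(ℝ)} ≤ C_p (sup_{y∈ℝ} ∫_{B(y,1)} (|u′|² + |u|²) dx)^{1/2 − 1/p} ‖u‖_{H¹(ℝ)}^{2/p}. -/

import Mathlib

open MeasureTheory
open scoped ENNReal

theorem lp_vanishing_estimate (p : ℝ≥0∞) (hp : 2 < p) :
    ∃ C : ℝ, 0 < C ∧ ∀ u u' : ℝ → ℝ,
      (∀ x, HasDerivAt u (u' x) x) →
      MemLp u 2 (volume : Measure ℝ) → MemLp u' 2 (volume : Measure ℝ) →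
      (eLpNorm u p (volume : Measure ℝ)).toReal ≤
        C * (⨆ y : ℝ, ∫ x in Set.Ioo (y - 1) (y + 1), ((u' x) ^ 2 + (u x) ^ 2))
              ^ ((1 : ℝ) / 2 - (1 / p).toReal)
          * (∫ x : ℝ, ((u x) ^ 2 + (u' x) ^ 2)) ^ ((1 / p).toReal) := by
  refine ⟨2, by norm_num, fun u u' hu hu2 hu'2 => ?_⟩
  -- basic facts
  have hu_cont : Continuous u := by
    rw [continuous_iff_continuousAt]; exact fun x => (hu x).continuousAt
  have hu2sq : Integrable (fun x => u x ^ 2) volume := hu2.integrable_sq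
  have hu'2sq : Integrable (fun x => u' x ^ 2) volume := hu'2.integrable_sq
  set g : ℝ → ℝ := fun x => u' x ^ 2 + u x ^ 2 with hg_def
  have hg_int : Integrable g volume := hu'2sq.add hu2sq
  have hg_nonneg : ∀ x, 0 ≤ g x := fun x => add_nonneg (sq_nonneg _) (sq_nonneg _)
  set S : ℝ := ⨆ y : ℝ, ∫ x in Set.Ioo (y - 1) (y + 1), g x with hS_def
  have hbdd : BddAbove (Set.range fun y : ℝ => ∫ x in Set.Ioo (y - 1) (y + 1), g x) := by
    refine ⟨∫ x, g x, ?_⟩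
    rintro r ⟨y, rfl⟩
    exact setIntegral_le_integral hg_int (Filter.Eventually.of_forall hg_nonneg)
  have h_le_S : ∀ y : ℝ, (∫ x in Set.Ioo (y - 1) (y + 1), g x) ≤ S :=
    fun y => le_ciSup hbdd y
  have hS_nonneg : 0 ≤ S :=
    le_trans (setIntegral_nonneg measurableSet_Ioo fun x _ => hg_nonneg x) (h_le_S 0)
  -- pointwise bound : u x ^ 2 ≤ 3/2 * S
  have hpt : ∀ x : ℝ, u x ^ 2 ≤ 3 / 2 * S := by
    intro x
    set f : ℝ → ℝ := fun t => 2 * u t * u' t with hf_def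
    have hf_meas : AEStronglyMeasurable f volume :=
      ((aestronglyMeasurable_const.mul hu_cont.aestronglyMeasurable).mul hu'2.1)
    have hf_bound : ∀ t, |f t| ≤ g t := by
      intro t
      rw [abs_le]
      simp only [hf_def, hg_def]
      constructor <;> nlinarith [sq_nonneg (u t - u' t), sq_nonneg (u t + u' t)]
    have hf_int : IntegrableOn f (Set.Icc (x - 1) (x + 1)) volume := by
      refine Integrable.mono' hg_int.integrableOn hf_meas.restrict ?_
      exact Filter.Eventually.of_forall fun t => by
        simpa [Real.norm_eq_abs] using hf_bound t
    have hxmem : x ∈ Set.Ioo (x - 1) (x + 1) := by constructor <;> linarith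
    have key : ∀ y ∈ Set.Ioo (x - 1) (x + 1), u x ^ 2 ≤ u y ^ 2 + S := by
      intro y hy
      have hsub : Set.uIcc y x ⊆ Set.Ioo (x - 1) (x + 1) :=
        Set.ordConnected_Ioo.uIcc_subset hy hxmem
      have hii : IntervalIntegrable f volume y x := by
        rw [intervalIntegrable_iff]
        exact hf_int.mono_set
          ((Set.uIoc_subset_uIcc.trans hsub).trans Set.Ioo_subset_Icc_self)
      have hftc : ∫ t in y..x, f t = u x ^ 2 - u y ^ 2 := by
        refine intervalIntegral.integral_eq_sub_of_hasDerivAt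
          (f := fun s => u s ^ 2) (f' := f) (fun t _ => ?_) hii
        have := (hu t).fun_pow 2
        convert this using 1
        · rfl
        simp [hf_def]
      have h1 : |∫ t in y..x, f t| ≤ ∫ t in Set.uIoc y x, |f t| := by
        simpa [Real.norm_eq_abs] using
          intervalIntegral.norm_integral_le_integral_norm_uIoc (f := f) (a := y) (b := x)
            (μ := volume)
      have h2 : (∫ t in Set.uIoc y x, |f t|) ≤ ∫ t in Set.Ioo (x - 1) (x + 1), |f t| := by
        refine setIntegral_mono_set
          (hf_int.mono_set Set.Ioo_subset_Icc_self).abs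
          (Filter.Eventually.of_forall fun t => abs_nonneg _)
          (HasSubset.Subset.eventuallyLE (Set.uIoc_subset_uIcc.trans hsub))
      have h3 : (∫ t in Set.Ioo (x - 1) (x + 1), |f t|) ≤ ∫ t in Set.Ioo (x - 1) (x + 1), g t := by
        refine setIntegral_mono_on
          (hf_int.mono_set Set.Ioo_subset_Icc_self).abs
          hg_int.integrableOn measurableSet_Ioo fun t _ => hf_bound t
      have h4 := h_le_S x
      have : u x ^ 2 - u y ^ 2 ≤ S := by
        calc u x ^ 2 - u y ^ 2 = ∫ t in y..x, f t := hftc.symm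
        _ ≤ |∫ t in y..x, f t| := le_abs_self _
        _ ≤ ∫ t in Set.uIoc y x, |f t| := h1
        _ ≤ S := le_trans h2 (le_trans h3 h4)
      linarith
    -- integrate the inequality over y
    have hvol : (volume (Set.Ioo (x - 1) (x + 1))).toReal = 2 := by
      rw [Real.volume_Ioo]
      rw [ENNReal.toReal_ofReal (by linarith)]
      ring
    have hconst : IntegrableOn (fun _ : ℝ => S) (Set.Ioo (x - 1) (x + 1)) volume :=
      integrableOn_const measure_Ioo_lt_top.ne
    have h4 : (∫ _ in Set.Ioo (x - 1) (x + 1), u x ^ 2)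
        ≤ ∫ y in Set.Ioo (x - 1) (x + 1), (u y ^ 2 + S) := by
      refine setIntegral_mono_on (integrableOn_const measure_Ioo_lt_top.ne)
        (hu2sq.integrableOn.add hconst) measurableSet_Ioo fun y hy => key y hy
    rw [setIntegral_const, measureReal_def, hvol,
      integral_add hu2sq.integrableOn hconst, setIntegral_const, measureReal_def, hvol] at h4
    have h5 : (∫ y in Set.Ioo (x - 1) (x + 1), u y ^ 2) ≤ S := by
      refine le_trans ?_ (h_le_S x)
      refine setIntegral_mono_on hu2sq.integrableOn hg_int.integrableOn measurableSet_Ioo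
        fun y _ => ?_
      simp only [hg_def]
      nlinarith [sq_nonneg (u' y)]
    simp only [smul_eq_mul] at h4
    linarith
  -- L^∞ bound
  set b : ℝ := Real.sqrt (3 / 2 * S) with hb_def
  have hb_nonneg : 0 ≤ b := Real.sqrt_nonneg _
  have habs : ∀ x, |u x| ≤ b := by
    intro x
    rw [hb_def, ← Real.sqrt_sq_eq_abs]
    exact Real.sqrt_le_sqrt (hpt x)
  set I : ℝ := ∫ x : ℝ, u x ^ 2 with hI_def
  have hI_nonneg : 0 ≤ I := integral_nonneg fun x => sq_nonneg _
  set N : ℝ := ∫ x : ℝ, (u x ^ 2 + u' x ^ 2) with hN_def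
  have hN_int : Integrable (fun x : ℝ => u x ^ 2 + u' x ^ 2) volume := hu2sq.add hu'2sq
  have hIN : I ≤ N := integral_mono hu2sq hN_int fun x => by nlinarith [sq_nonneg (u' x)]
  set θ : ℝ := (1 / p).toReal with hθ_def
  have hθ0 : 0 ≤ θ := ENNReal.toReal_nonneg
  have hθhalf : θ ≤ 1 / 2 := by
    have h1 : (1 / p) ≤ 1 / 2 := by
      rw [one_div, one_div, ENNReal.inv_le_inv]
      exact hp.le
    have h2 := ENNReal.toReal_mono (by simp) h1
    rw [hθ_def]
    refine le_trans h2 ?_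
    simp [ENNReal.toReal_div]
  have hexp1 : 0 ≤ 1 - 2 * θ := by linarith
  have hpoint2 : ∀ x : ℝ, (‖u x‖₊ : ℝ≥0∞) ^ (2 : ℝ) = ENNReal.ofReal (u x ^ 2) := by
    intro x
    rw [← enorm_eq_nnnorm, ← ofReal_norm_eq_enorm,
      ENNReal.ofReal_rpow_of_nonneg (norm_nonneg _) (by norm_num)]
    congr 1
    rw [show ((2 : ℝ)) = ((2 : ℕ) : ℝ) by norm_num, Real.rpow_natCast,
      Real.norm_eq_abs, sq_abs]
  have hI_lint : (∫⁻ x : ℝ, (‖u x‖₊ : ℝ≥0∞) ^ (2 : ℝ)) = ENNReal.ofReal I := by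
    rw [hI_def, ofReal_integral_eq_lintegral_ofReal hu2sq
      (Filter.Eventually.of_forall fun x => sq_nonneg _)]
    exact lintegral_congr fun x => hpoint2 x
  have hkey : eLpNorm u p volume
      ≤ ENNReal.ofReal b ^ (1 - 2 * θ) * ENNReal.ofReal I ^ θ := by
    rcases eq_or_ne p ⊤ with hptop | hptop
    · have hθz : θ = 0 := by simp [hθ_def, hptop]
      rw [hθz, hptop]
      simp only [mul_zero, sub_zero, ENNReal.rpow_one, ENNReal.rpow_zero, mul_one,
        eLpNorm_exponent_top]
      exact eLpNormEssSup_le_of_ae_bound (Filter.Eventually.of_forall fun x => by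
        simpa [Real.norm_eq_abs] using habs x)
    · have hp0 : p ≠ 0 := by positivity
      set pr : ℝ := p.toReal with hpr_def
      have hpr2 : (2 : ℝ) < pr := by
        rw [hpr_def, ← ENNReal.toReal_ofNat (n := 2)]
        exact (ENNReal.toReal_lt_toReal (by simp) hptop).2 hp
      have hprpos : (0 : ℝ) < pr := by linarith
      have hθpr : θ = 1 / pr := by
        rw [hθ_def, hpr_def, one_div, one_div, ENNReal.toReal_inv]
      have hptw : ∀ x : ℝ, (‖u x‖₊ : ℝ≥0∞) ^ pr
          ≤ ENNReal.ofReal b ^ (pr - 2) * (‖u x‖₊ : ℝ≥0∞) ^ (2 : ℝ) := by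
        intro x
        rcases eq_or_ne (u x) 0 with h0 | h0
        · rw [h0]
          simp [ENNReal.zero_rpow_of_pos hprpos, ENNReal.zero_rpow_of_pos (by norm_num : (0:ℝ) < 2)]
        · have hb0 : (‖u x‖₊ : ℝ≥0∞) ≠ 0 := by simp [h0]
          have heq : (‖u x‖₊ : ℝ≥0∞) ^ pr
              = (‖u x‖₊ : ℝ≥0∞) ^ (pr - 2) * (‖u x‖₊ : ℝ≥0∞) ^ (2 : ℝ) := by
            rw [← ENNReal.rpow_add _ _ hb0 ENNReal.coe_ne_top]
            congr 1
            ring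
          have hbase : (‖u x‖₊ : ℝ≥0∞) ≤ ENNReal.ofReal b := by
            rw [← enorm_eq_nnnorm, ← ofReal_norm_eq_enorm]
            exact ENNReal.ofReal_le_ofReal (by simpa [Real.norm_eq_abs] using habs x)
          rw [heq]
          gcongr <;> first | linarith | exact hbase
      calc eLpNorm u p volume
          = (∫⁻ x : ℝ, (‖u x‖₊ : ℝ≥0∞) ^ pr) ^ (1 / pr) :=
            eLpNorm_eq_lintegral_rpow_enorm_toReal hp0 hptop
        _ ≤ (ENNReal.ofReal b ^ (pr - 2) * ∫⁻ x : ℝ, (‖u x‖₊ : ℝ≥0∞) ^ (2 : ℝ)) ^ (1 / pr) := by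
            refine ENNReal.rpow_le_rpow ?_ (one_div_nonneg.2 hprpos.le)
            rw [← lintegral_const_mul' _ _ (ENNReal.rpow_lt_top_of_nonneg (by linarith) ENNReal.ofReal_ne_top).ne]
            exact lintegral_mono hptw
        _ = ENNReal.ofReal b ^ (1 - 2 * θ) * ENNReal.ofReal I ^ θ := by
            have hpr0 : pr ≠ 0 := ne_of_gt hprpos
            rw [hI_lint, ENNReal.mul_rpow_of_nonneg _ _ (one_div_nonneg.2 hprpos.le),
              ← ENNReal.rpow_mul, hθpr,
              show (pr - 2) * (1 / pr) = 1 - 2 * (1 / pr) by field_simp]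
  have hfin : (eLpNorm u p volume).toReal ≤ b ^ (1 - 2 * θ) * I ^ θ := by
    have hrhs : ENNReal.ofReal b ^ (1 - 2 * θ) * ENNReal.ofReal I ^ θ ≠ ⊤ :=
      (ENNReal.mul_lt_top
        (ENNReal.rpow_lt_top_of_nonneg hexp1 ENNReal.ofReal_ne_top)
        (ENNReal.rpow_lt_top_of_nonneg hθ0 ENNReal.ofReal_ne_top)).ne
    have h := ENNReal.toReal_mono hrhs hkey
    rwa [ENNReal.toReal_mul, ENNReal.ofReal_rpow_of_nonneg hb_nonneg hexp1,
      ENNReal.ofReal_rpow_of_nonneg hI_nonneg hθ0,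
      ENNReal.toReal_ofReal (Real.rpow_nonneg hb_nonneg _),
      ENNReal.toReal_ofReal (Real.rpow_nonneg hI_nonneg _)] at h
  refine hfin.trans ?_
  have hb_rpow : b ^ (1 - 2 * θ) = (3 / 2) ^ (1 / 2 - θ) * S ^ (1 / 2 - θ) := by
    rw [hb_def, Real.sqrt_eq_rpow, ← Real.rpow_mul (by linarith), show
      (1 / 2 : ℝ) * (1 - 2 * θ) = 1 / 2 - θ by ring,
      Real.mul_rpow (by norm_num) hS_nonneg]
  have h32 : (3 / 2 : ℝ) ^ (1 / 2 - θ) ≤ 2 := by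
    calc (3 / 2 : ℝ) ^ (1 / 2 - θ) ≤ (3 / 2 : ℝ) ^ (1 : ℝ) :=
          Real.rpow_le_rpow_of_exponent_le (by norm_num) (by linarith)
      _ ≤ 2 := by rw [Real.rpow_one]; norm_num
  have hIθ : I ^ θ ≤ N ^ θ := Real.rpow_le_rpow hI_nonneg hIN hθ0
  calc b ^ (1 - 2 * θ) * I ^ θ
      = (3 / 2) ^ (1 / 2 - θ) * S ^ (1 / 2 - θ) * I ^ θ := by rw [hb_rpow]
    _ ≤ 2 * S ^ (1 / 2 - θ) * N ^ θ := by
        have hSr : 0 ≤ S ^ (1 / 2 - θ) := Real.rpow_nonneg hS_nonneg _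
        have hIr : 0 ≤ I ^ θ := Real.rpow_nonneg hI_nonneg _
        gcongr
    _ = 2 * S ^ ((1 : ℝ) / 2 - θ) * N ^ θ := by norm_num
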